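/- arXiv:2302.09245 — 2 statements merged into one kernel-verified Lean document; each statement's English description precedes it below -/
import Mathlib

section
/- Let R be a ring and let E and E' be R-modules equipped with opposite filtrations: an ascending chain of submodules 0 = E_0 ⊆ E_1 ⊆ ⋯ ⊆ E_m = E and a descending chain of submodules E' = E'_1 ⊇ E'_2 ⊇ ⋯ ⊇ E'_{m+1} = 0, together with R-module isomorphisms E_i/E_{i-1} ≅ E'_i/E'_{i+1} for all 1 ≤ i ≤ m. If m ≥ 2, E_1 ≠ 0 and E_{m-1} ≠ E, then there exist nonzero R-linear maps h : E → E' and h' : E' → E with h ∘ h' = 0 and h' ∘ h = 0; explicitly, h is the composite E ↠ E/E_{m-1} ≅ E'_m ↪ E' and h' is the composite E' ↠ E'/E'_2 ≅ E_1 ↪ E. -/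
private lemma aux_exists_map {R : Type*} [Ring R] {E E' : Type*}
    [AddCommGroup E] [Module R E] [AddCommGroup E'] [Module R E']
    (A : Submodule R E) (B : Submodule R E') (e : (E ⧸ A) ≃ₗ[R] ↥B) :
    ∃ h : E →ₗ[R] E', LinearMap.ker h = A ∧ LinearMap.range h = B := by
  refine ⟨B.subtype ∘ₗ (e : (E ⧸ A) →ₗ[R] ↥B) ∘ₗ A.mkQ, ?_, ?_⟩
  · rw [LinearMap.ker_comp, Submodule.ker_subtype, Submodule.comap_bot,
      LinearMap.ker_comp, LinearEquiv.ker, Submodule.comap_bot, Submodule.ker_mkQ]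
  · rw [LinearMap.range_comp, LinearMap.range_comp, Submodule.range_mkQ,
      Submodule.map_top, LinearEquiv.range, Submodule.map_top, Submodule.range_subtype]

/-- Let `R` be a ring and let `E` and `E'` be `R`-modules equipped with
opposite filtrations: an ascending chain of submodules `0 = E_0 ⊆ E_1 ⊆ ⋯ ⊆ E_m = E` and a
descending chain of submodules `E' = E'_1 ⊇ E'_2 ⊇ ⋯ ⊇ E'_{m+1} = 0`, together with
`R`-module isomorphisms `E_i/E_{i-1} ≅ E'_i/E'_{i+1}` for all `1 ≤ i ≤ m`.  If `m ≥ 2`,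
`E_1 ≠ 0` and `E_{m-1} ≠ E`, then there exist nonzero `R`-linear maps `h : E → E'` and
`h' : E' → E` with `h ∘ h' = 0` and `h' ∘ h = 0`; explicitly `h` is the composite
`E ↠ E/E_{m-1} ≅ E'_m ↪ E'` (so `ker h = E_{m-1}` and `range h = E'_m`) and `h'` is the
composite `E' ↠ E'/E'_2 ≅ E_1 ↪ E` (so `ker h' = E'_2` and `range h' = E_1`). -/
theorem opposite_filtrations_exist_nonzero_maps
    {R : Type*} [Ring R] {E E' : Type*}
    [AddCommGroup E] [Module R E] [AddCommGroup E'] [Module R E']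
    (m : ℕ) (hm : 2 ≤ m)
    (F : ℕ → Submodule R E) (F' : ℕ → Submodule R E')
    (hFchain : ∀ i, i < m → F i ≤ F (i + 1))
    (hF0 : F 0 = ⊥) (hFtop : F m = ⊤)
    (hF'chain : ∀ i, 1 ≤ i → i ≤ m → F' (i + 1) ≤ F' i)
    (hF'1 : F' 1 = ⊤) (hF'bot : F' (m + 1) = ⊥)
    (iso : ∀ i, 1 ≤ i → i ≤ m →
      Nonempty ((↥(F i) ⧸ (F (i - 1)).comap (F i).subtype) ≃ₗ[R]
        (↥(F' i) ⧸ (F' (i + 1)).comap (F' i).subtype)))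
    (hF1 : F 1 ≠ ⊥) (hFm1 : F (m - 1) ≠ ⊤) :
    ∃ (h : E →ₗ[R] E') (h' : E' →ₗ[R] E),
      h ≠ 0 ∧ h' ≠ 0 ∧ h.comp h' = 0 ∧ h'.comp h = 0 ∧
      LinearMap.ker h = F (m - 1) ∧ LinearMap.range h = F' m ∧
      LinearMap.ker h' = F' 2 ∧ LinearMap.range h' = F 1 := by
  -- build h
  obtain ⟨em⟩ := iso m (by omega) le_rfl
  obtain ⟨e1⟩ := iso 1 (le_refl 1) (by omega)
  -- equiv ↥(F m) ≃ₗ E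
  let eT : ↥(F m) ≃ₗ[R] E := (LinearEquiv.ofEq _ _ hFtop).trans (Submodule.topEquiv)
  have heT : ∀ x : ↥(F m), eT x = (x : E) := fun x => rfl
  have hmapT : (Submodule.comap (F m).subtype (F (m - 1))).map (eT : ↥(F m) →ₗ[R] E)
      = F (m - 1) := by
    ext x
    simp only [Submodule.mem_map, Submodule.mem_comap, Submodule.coe_subtype]
    constructor
    · rintro ⟨y, hy, rfl⟩; simpa [heT] using hy
    · intro hx
      refine ⟨⟨x, by simp [hFtop]⟩, ?_, rfl⟩
      simpa using hx
  let qT : (↥(F m) ⧸ (F (m - 1)).comap (F m).subtype) ≃ₗ[R] (E ⧸ F (m - 1)) :=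
    Submodule.Quotient.equiv _ _ eT hmapT
  have hK' : (F' (m + 1)).comap (F' m).subtype = ⊥ := by
    rw [hF'bot, Submodule.comap_bot, Submodule.ker_subtype]
  let qB : (↥(F' m) ⧸ (F' (m + 1)).comap (F' m).subtype) ≃ₗ[R] ↥(F' m) :=
    Submodule.quotEquivOfEqBot _ hK'
  obtain ⟨h, hker, hrange⟩ := aux_exists_map (F (m - 1)) (F' m)
    (qT.symm.trans (em.trans qB))
  -- build h'
  let eT' : ↥(F' 1) ≃ₗ[R] E' := (LinearEquiv.ofEq _ _ hF'1).trans (Submodule.topEquiv)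
  have hmapT' : (Submodule.comap (F' 1).subtype (F' 2)).map (eT' : ↥(F' 1) →ₗ[R] E')
      = F' 2 := by
    ext x
    simp only [Submodule.mem_map, Submodule.mem_comap, Submodule.coe_subtype]
    constructor
    · rintro ⟨y, hy, rfl⟩; exact hy
    · intro hx
      exact ⟨⟨x, by simp [hF'1]⟩, by simpa using hx, rfl⟩
  let qT' : (↥(F' 1) ⧸ (F' 2).comap (F' 1).subtype) ≃ₗ[R] (E' ⧸ F' 2) :=
    Submodule.Quotient.equiv _ _ eT' hmapT'
  have hK : (F 0).comap (F 1).subtype = ⊥ := by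
    rw [hF0, Submodule.comap_bot, Submodule.ker_subtype]
  let qB' : (↥(F 1) ⧸ (F 0).comap (F 1).subtype) ≃ₗ[R] ↥(F 1) :=
    Submodule.quotEquivOfEqBot _ hK
  obtain ⟨h', hker', hrange'⟩ := aux_exists_map (F' 2) (F 1)
    (qT'.symm.trans (e1.symm.trans qB'))
  -- monotonicity facts
  have hmono : ∀ k, 1 + k ≤ m → F 1 ≤ F (1 + k) := by
    intro k
    induction k with
    | zero => intro _; exact le_rfl
    | succ n ih =>
      intro hk
      refine (ih (by omega)).trans ?_
      have this' := hFchain (1 + n) (by omega)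
      have e : 1 + (n + 1) = (1 + n) + 1 := by omega
      rw [e]; exact this'
  have hF1m : F 1 ≤ F (m - 1) := by
    have h12 : 1 + (m - 2) = m - 1 := by omega
    have := hmono (m - 2) (by omega)
    rwa [h12] at this
  have hmono' : ∀ k, 2 + k ≤ m → F' (2 + k) ≤ F' 2 := by
    intro k
    induction k with
    | zero => intro _; exact le_rfl
    | succ n ih =>
      intro hk
      refine le_trans ?_ (ih (by omega))
      have this' := hF'chain (2 + n) (by omega) (by omega)
      have e : 2 + (n + 1) = (2 + n) + 1 := by omega
      rw [e]; exact this'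
  have hF'm2 : F' m ≤ F' 2 := by
    have h12 : 2 + (m - 2) = m := by omega
    have := hmono' (m - 2) (by omega)
    rwa [h12] at this
  refine ⟨h, h', ?_, ?_, ?_, ?_, hker, hrange, hker', hrange'⟩
  · intro h0
    apply hFm1
    rw [← hker, h0, LinearMap.ker_zero]
  · intro h0
    apply hF1
    rw [← hrange', h0, LinearMap.range_zero]
  · ext x
    have : h' x ∈ LinearMap.ker h := by
      rw [hker]
      exact hF1m (hrange' ▸ LinearMap.mem_range_self h' x)
    simpa using this
  · ext x
    have : h x ∈ LinearMap.ker h' := by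
      rw [hker']
      exact hF'm2 (hrange ▸ LinearMap.mem_range_self h x)
    simpa using this
end

section
/- Let R be a discrete valuation ring with uniformizer π and fraction field K. Let V be a K-vector space and let E, E' be R-submodules of V whose K-linear spans coincide, and let a, b be natural numbers with π^a·E ⊆ E' and π^b·E' ⊆ E. For i ∈ ℤ define the R-submodule G_i of V by: G_i = E' for i ≤ −b; G_i = π^iE ∩ E' for −b < i < 0; G_i = E ∩ π^{−i}E' for 0 ≤ i < a; and G_i = E for i ≥ a. Then: (1) for every i < 0 one has G_{i+1} ⊆ G_i and π·G_i ⊆ G_{i+1}; (2) for every i ≥ 0 one has G_i ⊆ G_{i+1} and π·G_{i+1} ⊆ G_i; (3) defining x_i : G_i → G_{i+1} to be multiplication by π for i < 0 and the inclusion for i ≥ 0, and y_i : G_{i+1} → G_i to be the inclusion for i < 0 and multiplication by π for i ≥ 0, the composites x_i∘y_i and y_i∘x_i are multiplication by π; (4) x_i is bijective for i ≥ a and y_i is bijective for i ≤ −b−1; (5) for every i ∈ ℤ the induced R-linear map G_i/y_i(G_{i+1}) → G_{i+1}/y_{i+1}(G_{i+2}) is injective. -/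
open Pointwise

section Defs

variable {R K V : Type*} [CommRing R] [Field K] [Algebra R K]
  [AddCommGroup V] [Module K V] [Module R V] [IsScalarTower R K V]

/-- The image `k • N` of an `R`-submodule `N` of the `K`-vector space `V` under scalar
multiplication by `k : K`; for `k = π^i` with `i : ℤ` this is the submodule `π^i N`
(for negative `i` it equals `{v ∈ V : π^{-i} v ∈ N}`). -/
noncomputable def smulImage (k : K) (N : Submodule R V) : Submodule R V :=
  N.map ((LinearMap.lsmul K V k).restrictScalars R)

end Defs

section Maps

variable {R V : Type*} [CommRing R] [AddCommGroup V] [Module R V]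

/-- The map `x_i`: multiplication by `π` in negative degrees, the inclusion otherwise. -/
def xact (π : R) (i : ℤ) (v : V) : V := if i < 0 then π • v else v

/-- The map `y_i`: the inclusion in negative degrees, multiplication by `π` otherwise. -/
def yact (π : R) (i : ℤ) (v : V) : V := if i < 0 then v else π • v

/-- The image `y_i(G_{i+1}) ⊆ G_i` of the map `y_i : G_{i+1} → G_i`. -/
noncomputable def yim (π : R) (G : ℤ → Submodule R V) (i : ℤ) : Submodule R V :=
  if i < 0 then G (i + 1) else π • G (i + 1)

end Maps

section Helper

variable {R K V : Type*} [CommRing R] [Field K] [Algebra R K]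
  [AddCommGroup V] [Module K V] [Module R V] [IsScalarTower R K V]

theorem mem_smulImage_iff' {k : K} (hk : k ≠ 0) {N : Submodule R V} {v : V} :
    v ∈ smulImage k N ↔ k⁻¹ • v ∈ N := by
  unfold smulImage
  rw [Submodule.mem_map]
  constructor
  · rintro ⟨w, hw, rfl⟩
    simpa [smul_smul, inv_mul_cancel₀ hk] using hw
  · intro h
    exact ⟨k⁻¹ • v, h, by simp [smul_smul, mul_inv_cancel₀ hk, inv_mul_cancel₀ hk]⟩

end Helper

/-- Let `R` be a DVR with uniformizer `π` and fraction field `K`, `V` a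
`K`-vector space, and `E, E'` `R`-submodules of `V` with the same `K`-span, with `π^a E ⊆ E'`
and `π^b E' ⊆ E`.  Define `G_i = E'` for `i ≤ -b`, `G_i = π^i E ∩ E'` for `-b < i < 0`,
`G_i = E ∩ π^{-i} E'` for `0 ≤ i < a`, and `G_i = E` for `i ≥ a`.  Then:
(1) for `i < 0`, `G_{i+1} ⊆ G_i` and `π G_i ⊆ G_{i+1}`;
(2) for `i ≥ 0`, `G_i ⊆ G_{i+1}` and `π G_{i+1} ⊆ G_i`
    (together: `y_i` maps `G_{i+1}` into `G_i` and `x_i` maps `G_i` into `G_{i+1}`);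
(3) the composites `x_i ∘ y_i` and `y_i ∘ x_i` are multiplication by `π`;
(4) `x_i : G_i → G_{i+1}` is bijective for `i ≥ a` and `y_i : G_{i+1} → G_i` is bijective
    for `i ≤ -b - 1`;
(5) for every `i` the induced map `G_i / y_i(G_{i+1}) → G_{i+1} / y_{i+1}(G_{i+2})`
    (given by `x_i`) is injective, i.e. if `x ∈ G_i` and `x_i x ∈ y_{i+1}(G_{i+2})` then
    `x ∈ y_i(G_{i+1})`. -/
theorem interpolating_family_properties
    {R : Type*} [CommRing R] [IsDomain R] [IsDiscreteValuationRing R]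
    {K : Type*} [Field K] [Algebra R K] [IsFractionRing R K]
    {V : Type*} [AddCommGroup V] [Module K V] [Module R V] [IsScalarTower R K V]
    (π : R) (hπ : Irreducible π)
    (E E' : Submodule R V)
    (hspan : Submodule.span K (E : Set V) = Submodule.span K (E' : Set V))
    (a b : ℕ)
    (ha : ∀ x ∈ E, π ^ a • x ∈ E')
    (hb : ∀ x ∈ E', π ^ b • x ∈ E)
    (G : ℤ → Submodule R V)
    (hG₁ : ∀ i : ℤ, i ≤ -(b : ℤ) → G i = E')
    (hG₂ : ∀ i : ℤ, -(b : ℤ) < i → i < 0 →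
      G i = smulImage ((algebraMap R K π) ^ i) E ⊓ E')
    (hG₃ : ∀ i : ℤ, 0 ≤ i → i < (a : ℤ) →
      G i = E ⊓ smulImage ((algebraMap R K π) ^ (-i)) E')
    (hG₄ : ∀ i : ℤ, (a : ℤ) ≤ i → G i = E) :
    (∀ i : ℤ, ∀ x ∈ G (i + 1), yact π i x ∈ G i) ∧
    (∀ i : ℤ, ∀ x ∈ G i, xact π i x ∈ G (i + 1)) ∧
    (∀ (i : ℤ) (v : V), xact π i (yact π i v) = π • v ∧ yact π i (xact π i v) = π • v) ∧
    (∀ i : ℤ, (a : ℤ) ≤ i → Set.BijOn (xact π i) (G i : Set V) (G (i + 1) : Set V)) ∧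
    (∀ i : ℤ, i ≤ -(b : ℤ) - 1 → Set.BijOn (yact π i) (G (i + 1) : Set V) (G i : Set V)) ∧
    (∀ i : ℤ, ∀ x ∈ G i, xact π i x ∈ yim π G (i + 1) → x ∈ yim π G i) := by
  have hc : (algebraMap R K π) ≠ 0 :=
    (map_ne_zero_iff (algebraMap R K) (IsFractionRing.injective R K)).mpr hπ.ne_zero
  set c : K := algebraMap R K π with hcdef
  have hcz : ∀ i : ℤ, c ^ i ≠ 0 := fun i => zpow_ne_zero i hc
  have hπ1 : ∀ v : V, π • v = c ^ (1 : ℤ) • v := by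
    intro v; rw [zpow_one, hcdef, algebraMap_smul]
  have hpow : ∀ (n : ℕ) (v : V), π ^ n • v = c ^ (n : ℤ) • v := by
    intro n v
    rw [← algebraMap_smul K (π ^ n) v, map_pow, zpow_natCast, hcdef]
  have hcomb : ∀ (j k : ℤ) (v : V), c ^ j • c ^ k • v = c ^ (j + k) • v := by
    intro j k v; rw [smul_smul, ← zpow_add₀ hc]
  have hmE : ∀ (i : ℤ) (v : V), v ∈ smulImage (c ^ i) E ↔ c ^ (-i) • v ∈ E := by
    intro i v; rw [mem_smulImage_iff' (hcz i), ← zpow_neg]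
  have hmE' : ∀ (i : ℤ) (v : V), v ∈ smulImage (c ^ i) E' ↔ c ^ (-i) • v ∈ E' := by
    intro i v; rw [mem_smulImage_iff' (hcz i), ← zpow_neg]
  have hEexp : ∀ (j k : ℤ) (v : V), j = k → c ^ j • v ∈ E → c ^ k • v ∈ E := by
    rintro j k v rfl h; exact h
  have hE'exp : ∀ (j k : ℤ) (v : V), j = k → c ^ j • v ∈ E' → c ^ k • v ∈ E' := by
    rintro j k v rfl h; exact h
  -- G i ≤ E for i ≥ 0
  have memG_E : ∀ i : ℤ, 0 ≤ i → ∀ x ∈ G i, x ∈ E := by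
    intro i hi x hx
    by_cases h4 : (a : ℤ) ≤ i
    · rwa [hG₄ i h4] at hx
    · rw [hG₃ i hi (by omega)] at hx; exact hx.1
  -- G i ≤ E' for i ≤ 0
  have memG_E' : ∀ i : ℤ, i ≤ 0 → ∀ x ∈ G i, x ∈ E' := by
    intro i hi x hx
    by_cases h1 : i ≤ -(b : ℤ)
    · rwa [hG₁ i h1] at hx
    · by_cases h2 : i < 0
      · rw [hG₂ i (by omega) h2] at hx; exact hx.2
      · have hi0 : i = 0 := by omega
        subst hi0
        by_cases h4 : (a : ℤ) ≤ 0
        · rw [hG₄ 0 h4] at hx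
          have ha0 : a = 0 := by omega
          simpa [ha0] using ha x hx
        · rw [hG₃ 0 le_rfl (by omega)] at hx
          have := (hmE' 0 x).mp (by simpa using hx.2)
          simpa using this
  -- key elimination: for -b ≤ i ≤ 0, x ∈ G i implies c^(-i) • x ∈ E
  have elimE_neg : ∀ i : ℤ, -(b : ℤ) ≤ i → i ≤ 0 → ∀ x ∈ G i, c ^ (-i) • x ∈ E := by
    intro i hbi hi x hx
    by_cases h0 : i = 0
    · subst h0
      simpa using memG_E 0 le_rfl x hx
    · by_cases h1 : -(b : ℤ) < i
      · rw [hG₂ i h1 (by omega)] at hx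
        exact (hmE i x).mp hx.1
      · have hib : i = -(b : ℤ) := by omega
        rw [hG₁ i (le_of_eq hib)] at hx
        have := hb x hx
        rw [hpow b x] at this
        exact hEexp _ _ _ (by omega) this
  -- key elimination: for 0 ≤ i ≤ a, x ∈ G i implies c^i • x ∈ E'
  have elimE'_pos : ∀ i : ℤ, 0 ≤ i → i ≤ (a : ℤ) → ∀ x ∈ G i, c ^ i • x ∈ E' := by
    intro i hi hia x hx
    by_cases h4 : (a : ℤ) ≤ i
    · rw [hG₄ i h4] at hx
      have := ha x hx
      rw [hpow a x] at this
      exact hE'exp _ _ _ (by omega) this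
    · rw [hG₃ i hi (by omega)] at hx
      have := (hmE' (-i) x).mp hx.2
      rwa [neg_neg] at this
  -- introduction rule for membership in G i
  have memG_intro : ∀ (i : ℤ) (v : V),
      (i < 0 → v ∈ E') → (0 ≤ i → v ∈ E) →
      (-(b : ℤ) < i → i < 0 → c ^ (-i) • v ∈ E) →
      (0 ≤ i → i < (a : ℤ) → c ^ i • v ∈ E') → v ∈ G i := by
    intro i v h1 h2 h3 h4
    by_cases c4 : (a : ℤ) ≤ i
    · rw [hG₄ i c4]; exact h2 (by omega)
    · by_cases c3 : 0 ≤ i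
      · rw [hG₃ i c3 (by omega)]
        refine ⟨h2 c3, (hmE' (-i) v).mpr ?_⟩
        rw [neg_neg]; exact h4 c3 (by omega)
      · by_cases c2 : -(b : ℤ) < i
        · rw [hG₂ i c2 (by omega)]
          exact ⟨(hmE i v).mpr (h3 c2 (by omega)), h1 (by omega)⟩
        · rw [hG₁ i (by omega)]; exact h1 (by omega)
  -- closure of E and E' under multiplication by powers of c (nonneg)
  have hcE : ∀ v ∈ E, c ^ (1 : ℤ) • v ∈ E := by
    intro v hv; rw [← hπ1]; exact E.smul_mem π hv
  have hcE' : ∀ v ∈ E', c ^ (1 : ℤ) • v ∈ E' := by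
    intro v hv; rw [← hπ1]; exact E'.smul_mem π hv
  -- (1) for i < 0 : G (i+1) ≤ G i
  have main1 : ∀ i : ℤ, i < 0 → ∀ x ∈ G (i + 1), x ∈ G i := by
    intro i hi x hx
    refine memG_intro i x (fun _ => memG_E' (i + 1) (by omega) x hx)
      (fun h => absurd h (by omega)) (fun hb1 _ => ?_) (fun h => absurd h (by omega))
    have h' : c ^ (-(i + 1)) • x ∈ E := elimE_neg (i + 1) (by omega) (by omega) x hx
    have := hcE _ h'
    rw [hcomb] at this
    exact hEexp _ _ _ (by omega) this
  -- (1') for i < 0 : π • G i ≤ G (i+1)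
  have main1' : ∀ i : ℤ, i < 0 → ∀ x ∈ G i, π • x ∈ G (i + 1) := by
    intro i hi x hx
    have hxE' : x ∈ E' := memG_E' i (by omega) x hx
    refine memG_intro (i + 1) (π • x) (fun _ => E'.smul_mem π hxE')
      (fun h => ?_) (fun hb1 h1 => ?_) (fun h1 h2 => ?_)
    · -- 0 ≤ i + 1, so i = -1 : need π • x ∈ E
      have hi1 : i = -1 := by omega
      subst hi1
      by_cases hb0 : b = 0
      · -- E' ≤ E, so x ∈ E and π • x ∈ E
        have hxE : x ∈ E := by simpa [hb0] using hb x hxE'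
        exact E.smul_mem π hxE
      · have := elimE_neg (-1) (by omega) (by omega) x hx
        rw [hπ1 x]
        exact hEexp _ _ _ (by omega) this
    · -- -b < i+1 < 0 : need c^(-(i+1)) • (π • x) ∈ E
      rw [hπ1 x, hcomb]
      have := elimE_neg i (by omega) (by omega) x hx
      exact hEexp _ _ _ (by omega) this
    · -- 0 ≤ i+1 < a : i = -1, need c^(i+1) • (π•x) = π • x ∈ E'
      have hi1 : i = -1 := by omega
      subst hi1
      have : c ^ (0 : ℤ) • (π • x) ∈ E' := by simpa using E'.smul_mem π hxE'
      exact hE'exp _ _ _ (by omega) this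
  -- (2) for i ≥ 0 : G i ≤ G (i+1)
  have main2 : ∀ i : ℤ, 0 ≤ i → ∀ x ∈ G i, x ∈ G (i + 1) := by
    intro i hi x hx
    refine memG_intro (i + 1) x (fun h => absurd h (by omega))
      (fun _ => memG_E i hi x hx) (fun _ h => absurd h (by omega)) (fun _ ha1 => ?_)
    have h' : c ^ i • x ∈ E' := elimE'_pos i hi (by omega) x hx
    have := hcE' _ h'
    rw [hcomb] at this
    exact hE'exp _ _ _ (by omega) this
  -- (2') for i ≥ 0 : π • G (i+1) ≤ G i
  have main2' : ∀ i : ℤ, 0 ≤ i → ∀ x ∈ G (i + 1), π • x ∈ G i := by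
    intro i hi x hx
    have hxE : x ∈ E := memG_E (i + 1) (by omega) x hx
    refine memG_intro i (π • x) (fun h => absurd h (by omega))
      (fun _ => E.smul_mem π hxE) (fun _ h => absurd h (by omega)) (fun _ ha1 => ?_)
    rw [hπ1 x, hcomb]
    have := elimE'_pos (i + 1) (by omega) (by omega) x hx
    exact hE'exp _ _ _ (by omega) this
  -- key lemma A for statement 5, negative side
  have keyA : ∀ i : ℤ, i ≤ -2 → ∀ x ∈ G i, π • x ∈ G (i + 2) → x ∈ G (i + 1) := by
    intro i hi x hx hpx
    refine memG_intro (i + 1) x (fun _ => memG_E' i (by omega) x hx)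
      (fun h => absurd h (by omega)) (fun hb1 _ => ?_) (fun h => absurd h (by omega))
    -- need c^(-(i+1)) • x ∈ E, knowing -b < i+1
    have := elimE_neg (i + 2) (by omega) (by omega) _ hpx
    rw [hπ1 x, hcomb] at this
    exact hEexp _ _ _ (by omega) this
  -- key lemma B for statement 5, nonnegative side
  have keyB : ∀ i : ℤ, 0 ≤ i → ∀ w ∈ G (i + 2), π • w ∈ G i → w ∈ G (i + 1) := by
    intro i hi w hw hpw
    refine memG_intro (i + 1) w (fun h => absurd h (by omega))
      (fun _ => memG_E (i + 2) (by omega) w hw) (fun _ h => absurd h (by omega))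
      (fun _ ha1 => ?_)
    have := elimE'_pos i hi (by omega) _ hpw
    rw [hπ1 w, hcomb] at this
    exact hE'exp _ _ _ (by omega) this
  -- injectivity of multiplication by π on V
  have hinj : ∀ x y : V, π • x = π • y → x = y := by
    intro x y h
    rw [hπ1 x, hπ1 y] at h
    exact smul_right_injective V (hcz 1) h
  -- membership in pointwise π • S
  have hps : ∀ (S : Submodule R V) (x : V), x ∈ π • S ↔ ∃ y ∈ S, π • y = x := by
    intro S x
    constructor
    · intro h
      rw [← SetLike.mem_coe, Submodule.coe_pointwise_smul] at h
      obtain ⟨y, hy, hyx⟩ := h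
      exact ⟨y, hy, hyx⟩
    · rintro ⟨y, hy, rfl⟩
      exact Submodule.smul_mem_pointwise_smul y π S hy
  refine ⟨?_, ?_, ?_, ?_, ?_, ?_⟩
  · -- y maps G (i+1) into G i
    intro i x hx
    by_cases h : i < 0
    · rw [yact, if_pos h]; exact main1 i h x hx
    · rw [yact, if_neg h]; exact main2' i (by omega) x hx
  · -- x maps G i into G (i+1)
    intro i x hx
    by_cases h : i < 0
    · rw [xact, if_pos h]; exact main1' i h x hx
    · rw [xact, if_neg h]; exact main2 i (by omega) x hx
  · -- composites are multiplication by π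
    intro i v
    by_cases h : i < 0 <;> simp [xact, yact, h]
  · -- x bijective for i ≥ a
    intro i hi
    have hid : ∀ v : V, xact π i v = v := fun v => if_neg (by omega)
    have h1 : G i = E := hG₄ i hi
    have h2 : G (i + 1) = E := hG₄ (i + 1) (by omega)
    refine ⟨fun x hx => ?_, fun x _ y _ hxy => ?_, fun x hx => ⟨x, ?_, hid x⟩⟩
    · rw [SetLike.mem_coe, hid] at *
      rw [h1] at hx; rw [h2]; exact hx
    · rwa [hid, hid] at hxy
    · rw [SetLike.mem_coe] at *
      rw [h1]; rwa [h2] at hx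
  · -- y bijective for i ≤ -b - 1
    intro i hi
    have hid : ∀ v : V, yact π i v = v := fun v => if_pos (by omega)
    have h1 : G i = E' := hG₁ i (by omega)
    have h2 : G (i + 1) = E' := hG₁ (i + 1) (by omega)
    refine ⟨fun x hx => ?_, fun x _ y _ hxy => ?_, fun x hx => ⟨x, ?_, hid x⟩⟩
    · rw [SetLike.mem_coe, hid] at *
      rw [h2] at hx; rw [h1]; exact hx
    · rwa [hid, hid] at hxy
    · rw [SetLike.mem_coe] at *
      rw [h2]; rwa [h1] at hx
  · -- statement 5
    intro i x hx hxy
    by_cases h1 : i + 1 < 0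
    · -- i ≤ -2
      rw [yim, if_pos h1] at hxy
      rw [xact, if_pos (by omega)] at hxy
      rw [yim, if_pos (by omega)]
      have h2 : i + 1 + 1 = i + 2 := by ring
      rw [h2] at hxy
      exact keyA i (by omega) x hx hxy
    · by_cases h0 : i < 0
      · -- i = -1
        have hi1 : i = -1 := by omega
        subst hi1
        rw [yim, if_neg h1] at hxy
        rw [xact, if_pos (by norm_num)] at hxy
        rw [yim, if_pos (by norm_num)]
        rw [hps] at hxy
        obtain ⟨w, hw, hwx⟩ := hxy
        have hwx' : w = x := hinj w x hwx
        subst hwx'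
        -- w ∈ G (-1+1+1) = G 1, x ∈ G (-1); show x ∈ G (-1+1) = G 0
        refine memG_intro (-1 + 1) w (fun h => absurd h (by omega))
          (fun _ => memG_E (-1 + 1 + 1) (by omega) w hw)
          (fun _ h => absurd h (by omega)) (fun _ _ => ?_)
        have : c ^ (0 : ℤ) • w ∈ E' := by
          simpa using memG_E' (-1) (by omega) w hx
        exact hE'exp _ _ _ (by omega) this
      · -- i ≥ 0
        rw [yim, if_neg (by omega)] at hxy
        rw [xact, if_neg h0] at hxy
        rw [yim, if_neg h0]
        rw [hps] at hxy
        obtain ⟨w, hw, hwx⟩ := hxy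
        rw [hps]
        refine ⟨w, ?_, hwx⟩
        have : i + 1 + 1 = i + 2 := by ring
        rw [this] at hw
        exact keyB i (by omega) w hw (by rw [hwx]; exact hx)
end
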